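/- For every n ≥ 1, in the game Nim^1_{n,≤n} (slow Moore's Nim with k = n), a position x satisfies G(x) = 0 and G⁻(x) = 1 if and only if x = (0, …, 0, 2j) for some j ≥ 0, and x satisfies G(x) = 1 and G⁻(x) = 0 if and only if x = (0, …, 0, 2j+1) for some j ≥ 0. -/

import Mathlib

/-- The minimum excludant of a set of natural numbers. -/
noncomputable def mex (S : Set ℕ) : ℕ := sInf {n : ℕ | n ∉ S}

/-- A move in slow Moore's Nim `Nim¹_{n,≤k}`: at least `1` and at most `k`
coordinates, each strictly positive, are decreased by one token. -/
def MooreMove (n k : ℕ) (x y : Fin n → ℕ) : Prop :=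
  (∀ i, y i ≤ x i ∧ x i ≤ y i + 1) ∧
  1 ≤ (Finset.univ.filter fun i => y i < x i).card ∧
  (Finset.univ.filter fun i => y i < x i).card ≤ k

theorem MooreMove.sum_lt {n k : ℕ} {x y : Fin n → ℕ} (h : MooreMove n k x y) :
    ∑ i, y i < ∑ i, x i := by
  obtain ⟨h1, h2, -⟩ := h
  obtain ⟨i, hi⟩ := Finset.card_pos.mp h2
  rw [Finset.mem_filter] at hi
  exact Finset.sum_lt_sum (fun j _ => (h1 j).1) ⟨i, Finset.mem_univ i, hi.2⟩

/-- The normal-play Sprague–Grundy function of slow Moore's Nim: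
`G(x) = mex {G(y) : y reachable from x in one move}`. -/
noncomputable def mooreG (n k : ℕ) (x : Fin n → ℕ) : ℕ :=
  mex (Set.range fun y : {y : Fin n → ℕ // MooreMove n k x y} => mooreG n k y.1)
termination_by ∑ i, x i
decreasing_by exact y.2.sum_lt

open Classical in
/-- The misère Sprague–Grundy function of slow Moore's Nim: the same `mex`
recursion at nonterminal positions, and value `1` at terminal positions. -/
noncomputable def mooreGm (n k : ℕ) (x : Fin n → ℕ) : ℕ :=
  if ∃ y, MooreMove n k x y then
    mex (Set.range fun y : {y : Fin n → ℕ // MooreMove n k x y} => mooreGm n k y.1)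
  else 1
termination_by ∑ i, x i
decreasing_by exact y.2.sum_lt

section MooreAux

lemma mex_empty : mex (∅ : Set ℕ) = 0 := by
  have : {n : ℕ | n ∉ (∅ : Set ℕ)} = Set.univ := by ext n; simp
  rw [mex, this]
  exact Nat.sInf_eq_zero.mpr (Or.inl (Set.mem_univ 0))

lemma mex_singleton_zero : mex ({0} : Set ℕ) = 1 := by
  rw [mex]
  have h1 : (1 : ℕ) ∈ {n : ℕ | n ∉ ({0} : Set ℕ)} := by simp
  refine le_antisymm (Nat.sInf_le h1) ?_
  rcases Nat.eq_zero_or_pos (sInf {n : ℕ | n ∉ ({0} : Set ℕ)}) with h | h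
  · have hmem := Nat.sInf_mem (⟨1, h1⟩ : {n : ℕ | n ∉ ({0} : Set ℕ)}.Nonempty)
    rw [h] at hmem
    simp at hmem
  · exact h

lemma mex_singleton_one : mex ({1} : Set ℕ) = 0 := by
  rw [mex]
  exact Nat.sInf_eq_zero.mpr (Or.inl (by simp))

/-- The set of positive coordinates. -/
def posSet {n : ℕ} (x : Fin n → ℕ) : Finset (Fin n) := Finset.univ.filter fun i => 0 < x i

lemma two_le_posSet {n : ℕ} {y : Fin n → ℕ} {i j : Fin n} (hij : i ≠ j)
    (hi : 0 < y i) (hj : 0 < y j) : 2 ≤ (posSet y).card := by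
  have hs : ({i, j} : Finset (Fin n)) ⊆ posSet y := by
    intro a ha
    simp only [Finset.mem_insert, Finset.mem_singleton] at ha
    rcases ha with rfl | rfl <;> simp [posSet, hi, hj]
  calc 2 = ({i, j} : Finset (Fin n)).card := (Finset.card_pair hij).symm
    _ ≤ _ := Finset.card_le_card hs

lemma mooreMove_of {n : ℕ} {x y : Fin n → ℕ}
    (h1 : ∀ i, y i ≤ x i ∧ x i ≤ y i + 1) (h2 : ∃ i, y i < x i) : MooreMove n n x y := by
  refine ⟨h1, ?_, ?_⟩
  · obtain ⟨i, hi⟩ := h2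
    exact Finset.card_pos.mpr ⟨i, by simp [hi]⟩
  · calc (Finset.univ.filter fun i => y i < x i).card ≤ Finset.univ.card :=
        Finset.card_filter_le _ _
      _ = n := by simp

/-- The position with a single (possibly empty) pile `t` at coordinate `j`. -/
def mooreSingle {n : ℕ} (j : Fin n) (t : ℕ) : Fin n → ℕ := fun i => if i = j then t else 0

lemma mooreSingle_self {n : ℕ} (j : Fin n) (t : ℕ) : mooreSingle j t j = t := by
  simp [mooreSingle]

lemma mooreSingle_ne {n : ℕ} {i j : Fin n} (h : i ≠ j) (t : ℕ) : mooreSingle j t i = 0 := by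
  simp [mooreSingle, h]

lemma mooreSingle_sum {n : ℕ} (j : Fin n) (t : ℕ) : ∑ i, mooreSingle j t i = t := by
  simp [mooreSingle]

lemma mooreSingle_posSet {n : ℕ} (j : Fin n) (t : ℕ) :
    (posSet (mooreSingle j t)).card ≤ 1 := by
  have hs : posSet (mooreSingle j t) ⊆ {j} := by
    intro i hi
    simp only [posSet, Finset.mem_filter, mooreSingle] at hi
    simp only [Finset.mem_singleton]
    by_contra hne
    replace hi : 0 < mooreSingle j t i := (Finset.mem_filter.mp hi).2
    rw [mooreSingle_ne hne] at hi
    omega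
  calc _ ≤ ({j} : Finset (Fin n)).card := Finset.card_le_card hs
    _ = 1 := rfl

lemma mooreKey (n : ℕ) : ∀ s : ℕ, ∀ x : Fin n → ℕ, ∑ i, x i = s →
    ((posSet x).card ≤ 1 → mooreG n n x = s % 2 ∧ mooreGm n n x = (s + 1) % 2) ∧
    (2 ≤ (posSet x).card → mooreG n n x = mooreGm n n x) := by
  intro s
  induction s using Nat.strong_induction_on with
  | _ s IH =>
  intro x hxs
  constructor
  · intro hc1
    rcases Nat.eq_zero_or_pos s with hs0 | hs
    · subst hs0
      have hx0 : ∀ i, x i = 0 := fun i =>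
        (Finset.sum_eq_zero_iff.mp hxs) i (Finset.mem_univ i)
      have hnomove : ¬ ∃ y, MooreMove n n x y := by
        rintro ⟨y, hy⟩
        obtain ⟨i, hi⟩ := Finset.card_pos.mp hy.2.1
        rw [Finset.mem_filter] at hi
        have := hx0 i
        omega
      haveI hempty : IsEmpty {y : Fin n → ℕ // MooreMove n n x y} :=
        ⟨fun y => hnomove ⟨y.1, y.2⟩⟩
      constructor
      · rw [mooreG, Set.range_eq_empty _, mex_empty]
      · rw [mooreGm, if_neg hnomove]
    · obtain ⟨i₀, hi₀⟩ : ∃ i, 0 < x i := by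
        by_contra h
        push_neg at h
        have : ∑ i, x i = 0 := Finset.sum_eq_zero fun i _ => Nat.le_zero.mp (h i)
        omega
      have hxo : ∀ i, i ≠ i₀ → x i = 0 := by
        intro i hne
        by_contra h
        have := two_le_posSet hne (Nat.pos_of_ne_zero h) hi₀
        omega
      have hxi₀ : x i₀ = s := by
        rw [← hxs]
        exact (Finset.sum_eq_single i₀ (fun b _ hb => hxo b hb) (by simp)).symm
      have hmove : MooreMove n n x (mooreSingle i₀ (s - 1)) := by
        apply mooreMove_of
        · intro i
          by_cases h : i = i₀
          · rw [h, mooreSingle_self]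
            omega
          · rw [hxo i h, mooreSingle_ne h]
            omega
        · refine ⟨i₀, ?_⟩
          rw [mooreSingle_self]
          omega
      have huniq : ∀ y, MooreMove n n x y → y = mooreSingle i₀ (s - 1) := by
        intro y hy
        funext i
        by_cases h : i = i₀
        · obtain ⟨j, hj⟩ := Finset.card_pos.mp hy.2.1
          rw [Finset.mem_filter] at hj
          have hji : j = i₀ := by
            by_contra hne
            have h1 := hxo j hne
            have h2 := (hy.1 j).1
            omega
          have h2 : y i₀ < x i₀ := hji ▸ hj.2
          have h1 := (hy.1 i₀).2
          rw [h, mooreSingle_self]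
          omega
        · have h1 := (hy.1 i).1
          have h2 := hxo i h
          rw [mooreSingle_ne h]
          omega
      have hGrange : (Set.range fun y : {y : Fin n → ℕ // MooreMove n n x y} =>
          mooreG n n y.1) = {mooreG n n (mooreSingle i₀ (s - 1))} := by
        apply Set.eq_singleton_iff_unique_mem.mpr
        refine ⟨⟨⟨_, hmove⟩, rfl⟩, ?_⟩
        rintro v ⟨⟨y, hy⟩, rfl⟩
        show mooreG n n y = _
        rw [huniq y hy]
      have hGmrange : (Set.range fun y : {y : Fin n → ℕ // MooreMove n n x y} =>
          mooreGm n n y.1) = {mooreGm n n (mooreSingle i₀ (s - 1))} := by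
        apply Set.eq_singleton_iff_unique_mem.mpr
        refine ⟨⟨⟨_, hmove⟩, rfl⟩, ?_⟩
        rintro v ⟨⟨y, hy⟩, rfl⟩
        show mooreGm n n y = _
        rw [huniq y hy]
      have hIH := (IH (s - 1) (by omega) (mooreSingle i₀ (s - 1))
        (mooreSingle_sum i₀ (s - 1))).1 (mooreSingle_posSet i₀ (s - 1))
      constructor
      · rw [mooreG, hGrange, hIH.1]
        have hp : (s - 1) % 2 = 0 ∨ (s - 1) % 2 = 1 := by omega
        rcases hp with h | h <;> rw [h]
        · rw [mex_singleton_zero]; omega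
        · rw [mex_singleton_one]; omega
      · rw [mooreGm, if_pos ⟨_, hmove⟩, hGmrange, hIH.2]
        have hp : (s - 1 + 1) % 2 = 0 ∨ (s - 1 + 1) % 2 = 1 := by omega
        rcases hp with h | h <;> rw [h]
        · rw [mex_singleton_zero]; omega
        · rw [mex_singleton_one]; omega
  · intro hc2
    obtain ⟨i₁, hi₁m, i₂, hi₂m, hne⟩ := Finset.one_lt_card.mp hc2
    simp only [posSet, Finset.mem_filter, Finset.mem_univ, true_and] at hi₁m hi₂m
    have hmove0 : ∃ y, MooreMove n n x y := by
      refine ⟨Function.update x i₁ (x i₁ - 1), mooreMove_of ?_ ?_⟩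
      · intro i
        by_cases h : i = i₁
        · rw [h, Function.update_self]
          omega
        · rw [Function.update_of_ne h]
          omega
      · refine ⟨i₁, ?_⟩
        rw [Function.update_self]
        omega
    -- from any reachable near-terminal position, both parities of single piles are reachable
    have key2 : (∃ y, MooreMove n n x y ∧ (posSet y).card ≤ 1) →
        ∀ w : ℕ, w ≤ 1 → ∃ z, MooreMove n n x z ∧ (posSet z).card ≤ 1 ∧
          (∑ i, z i) % 2 = w := by
      rintro ⟨y, hy, hy1⟩ w hw
      obtain ⟨j, hxj, hoth⟩ : ∃ j, 0 < x j ∧ ∀ i, i ≠ j → x i ≤ 1 := by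
        by_cases hyz : ∃ j, 0 < y j
        · obtain ⟨j, hj⟩ := hyz
          refine ⟨j, lt_of_lt_of_le hj (hy.1 j).1, fun i hi => ?_⟩
          have hyi : y i = 0 := by
            by_contra h
            have := two_le_posSet hi (Nat.pos_of_ne_zero h) hj
            omega
          have := (hy.1 i).2
          omega
        · push_neg at hyz
          refine ⟨i₁, hi₁m, fun i _ => ?_⟩
          have h1 := (hy.1 i).2
          have h2 := hyz i
          omega
      obtain ⟨t, ht1, ht2, ht3⟩ : ∃ t, t ≤ x j ∧ x j ≤ t + 1 ∧ t % 2 = w := by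
        by_cases hp : x j % 2 = w
        · exact ⟨x j, le_refl _, by omega, hp⟩
        · exact ⟨x j - 1, by omega, by omega, by omega⟩
      refine ⟨mooreSingle j t, mooreMove_of ?_ ?_, mooreSingle_posSet j t, ?_⟩
      · intro i
        by_cases h : i = j
        · rw [h, mooreSingle_self]
          omega
        · have := hoth i h
          rw [mooreSingle_ne h]
          omega
      · have hex : ∃ i, i ≠ j ∧ 0 < x i := by
          rcases eq_or_ne i₁ j with h | h
          · exact ⟨i₂, by rw [← h]; exact fun hc => hne hc.symm, hi₂m⟩
          · exact ⟨i₁, h, hi₁m⟩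
        obtain ⟨i, hij, hxi⟩ := hex
        refine ⟨i, ?_⟩
        rw [mooreSingle_ne hij]
        omega
      · rw [mooreSingle_sum]; exact ht3
    have hAB : (Set.range fun y : {y : Fin n → ℕ // MooreMove n n x y} =>
        mooreG n n y.1) = (Set.range fun y : {y : Fin n → ℕ // MooreMove n n x y} =>
        mooreGm n n y.1) := by
      ext v
      constructor
      · rintro ⟨⟨y, hy⟩, rfl⟩
        have hylt : ∑ i, y i < s := hxs ▸ hy.sum_lt
        by_cases h1 : (posSet y).card ≤ 1
        · have hIHy := (IH _ hylt y rfl).1 h1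
          obtain ⟨z, hz, hz1, hz2⟩ := key2 ⟨y, hy, h1⟩ ((∑ i, y i + 1) % 2) (by omega)
          refine ⟨⟨z, hz⟩, ?_⟩
          have hzlt : ∑ i, z i < s := hxs ▸ hz.sum_lt
          have hIHz := (IH _ hzlt z rfl).1 hz1
          show mooreGm n n z = mooreG n n y
          rw [hIHz.2, hIHy.1]
          omega
        · push_neg at h1
          refine ⟨⟨y, hy⟩, ?_⟩
          show mooreGm n n y = mooreG n n y
          exact ((IH _ hylt y rfl).2 h1).symm
      · rintro ⟨⟨y, hy⟩, rfl⟩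
        have hylt : ∑ i, y i < s := hxs ▸ hy.sum_lt
        by_cases h1 : (posSet y).card ≤ 1
        · have hIHy := (IH _ hylt y rfl).1 h1
          obtain ⟨z, hz, hz1, hz2⟩ := key2 ⟨y, hy, h1⟩ ((∑ i, y i + 1) % 2) (by omega)
          refine ⟨⟨z, hz⟩, ?_⟩
          have hzlt : ∑ i, z i < s := hxs ▸ hz.sum_lt
          have hIHz := (IH _ hzlt z rfl).1 hz1
          show mooreG n n z = mooreGm n n y
          rw [hIHz.1, hIHy.2]
          omega
        · push_neg at h1
          refine ⟨⟨y, hy⟩, ?_⟩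
          show mooreG n n y = mooreGm n n y
          exact (IH _ hylt y rfl).2 h1
    rw [mooreG, mooreGm, if_pos hmove0, hAB]

end MooreAux

/-- In `Nim¹_{n,≤n}` with `n = m + 1 ≥ 1` piles, the swap positions:
`(G, G⁻) = (0, 1)` exactly at positions `(0, …, 0, 2j)` and
`(G, G⁻) = (1, 0)` exactly at positions `(0, …, 0, 2j+1)`. -/
theorem stmt7 (m : ℕ) (x : Fin (m + 1) → ℕ) (hx : Monotone x) :
    ((mooreG (m + 1) (m + 1) x = 0 ∧ mooreGm (m + 1) (m + 1) x = 1) ↔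
      ((∀ i, i ≠ Fin.last m → x i = 0) ∧ ∃ j : ℕ, x (Fin.last m) = 2 * j)) ∧
    ((mooreG (m + 1) (m + 1) x = 1 ∧ mooreGm (m + 1) (m + 1) x = 0) ↔
      ((∀ i, i ≠ Fin.last m → x i = 0) ∧ ∃ j : ℕ, x (Fin.last m) = 2 * j + 1)) := by
  have hkey := mooreKey (m + 1) (∑ i, x i) x rfl
  have hcard : (∀ i, i ≠ Fin.last m → x i = 0) ↔ (posSet x).card ≤ 1 := by
    constructor
    · intro h
      have hs : posSet x ⊆ {Fin.last m} := by
        intro i hi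
        simp only [posSet, Finset.mem_filter, Finset.mem_univ, true_and] at hi
        simp only [Finset.mem_singleton]
        by_contra hne
        rw [h i hne] at hi
        omega
      calc (posSet x).card ≤ ({Fin.last m} : Finset (Fin (m + 1))).card :=
          Finset.card_le_card hs
        _ = 1 := rfl
    · intro h i hi
      by_contra hpos
      have hxi : 0 < x i := Nat.pos_of_ne_zero hpos
      have hxL : 0 < x (Fin.last m) := lt_of_lt_of_le hxi (hx (Fin.le_last i))
      have := two_le_posSet hi hxi hxL
      omega
  have hsum : (∀ i, i ≠ Fin.last m → x i = 0) → ∑ i, x i = x (Fin.last m) := by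
    intro h
    exact Finset.sum_eq_single (Fin.last m) (fun b _ hb => h b hb) (by simp)
  constructor
  · constructor
    · rintro ⟨hG, hGm⟩
      have hc : (posSet x).card ≤ 1 := by
        by_contra h
        push_neg at h
        have := hkey.2 h
        omega
      have h0 := hkey.1 hc
      have hzero := hcard.mpr hc
      refine ⟨hzero, x (Fin.last m) / 2, ?_⟩
      have hs := hsum hzero
      have h1 := h0.1
      omega
    · rintro ⟨hzero, j, hj⟩
      have hc := hcard.mp hzero
      have h0 := hkey.1 hc
      have hs := hsum hzero
      have h1 := h0.1
      have h2 := h0.2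
      omega
  · constructor
    · rintro ⟨hG, hGm⟩
      have hc : (posSet x).card ≤ 1 := by
        by_contra h
        push_neg at h
        have := hkey.2 h
        omega
      have h0 := hkey.1 hc
      have hzero := hcard.mpr hc
      refine ⟨hzero, x (Fin.last m) / 2, ?_⟩
      have hs := hsum hzero
      have h1 := h0.1
      omega
    · rintro ⟨hzero, j, hj⟩
      have hc := hcard.mp hzero
      have h0 := hkey.1 hc
      have hs := hsum hzero
      have h1 := h0.1
      have h2 := h0.2
      omega
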